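/- Let R = ℂ[A₁,A₂,B₁,p₁,p₂,p₃]/(B₁(A₁−A₂) − p₂p₃) with the ℂ* × {±1}-action given by (c,s)·(A₁,A₂,B₁,p₁,p₂,p₃) = (A₁, A₂, csB₁, c⁻¹p₁, sp₂, cp₃). The ℂ-algebra homomorphism from ℂ[x₁,x₂,x₃,x₄,x₅,x₆] to the subring of (ℂ* × {±1})-invariants of R sending x₁ ↦ A₁, x₂ ↦ A₂, x₃ ↦ p₂², x₄ ↦ p₁p₃, x₅ ↦ p₂B₁p₁, x₆ ↦ B₁²p₁² is surjective, and its kernel is the ideal generated by the three quadrics x₅(x₁−x₂) − x₄x₃, x₆(x₁−x₂) − x₄x₅, and x₅² − x₃x₆. In particular the invariant ring is isomorphic to ℂ[x₁,…,x₆]/(x₅(x₁−x₂) − x₄x₃, x₆(x₁−x₂) − x₄x₅, x₅² − x₃x₆). -/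

import Mathlib

open MvPolynomial

noncomputable section

/-- The polynomial ring `ℂ[A₁,A₂,B₁,p₁,p₂,p₃]`, with variables `X 0, …, X 5`
corresponding to `A₁, A₂, B₁, p₁, p₂, p₃`. -/
abbrev P6 := MvPolynomial (Fin 6) ℂ

/-- The defining relation `B₁(A₁ - A₂) - p₂p₃` of the hypersurface `X ⊂ 𝔸⁶`. -/
def relC2 : P6 := X 2 * (X 0 - X 1) - X 4 * X 5

/-- The ideal generated by the defining relation; `R = P6 ⧸ IC2`. -/
def IC2 : Ideal P6 := Ideal.span {relC2}

/-- The action of `(c,s) ∈ ℂ* × {±1}` on the coordinate ring, induced by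
`(c,s)·(A₁,A₂,B₁,p₁,p₂,p₃) = (A₁, A₂, csB₁, c⁻¹p₁, sp₂, cp₃)`. -/
def actC2 (c s : ℂ) : P6 →ₐ[ℂ] P6 :=
  aeval ![X 0, X 1, C (c * s) * X 2, C c⁻¹ * X 3, C s * X 4, C c * X 5]

/-- The homomorphism `ℂ[x₁,…,x₆] → R` sending
`x₁ ↦ A₁`, `x₂ ↦ A₂`, `x₃ ↦ p₂²`, `x₄ ↦ p₁p₃`, `x₅ ↦ p₂B₁p₁`, `x₆ ↦ B₁²p₁²`
(here `x₁,…,x₆` are the variables `X 0, …, X 5` of the source). -/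
def psiC2 : MvPolynomial (Fin 6) ℂ →ₐ[ℂ] P6 ⧸ IC2 :=
  aeval ![Ideal.Quotient.mk IC2 (X 0), Ideal.Quotient.mk IC2 (X 1),
    Ideal.Quotient.mk IC2 (X 4 ^ 2), Ideal.Quotient.mk IC2 (X 3 * X 5),
    Ideal.Quotient.mk IC2 (X 4 * X 2 * X 3), Ideal.Quotient.mk IC2 (X 2 ^ 2 * X 3 ^ 2)]

/- ## auxiliary definitions -/

@[simp]
lemma Matrix.cons_val_five {α : Type*} {m : ℕ} (x : α) (u : Fin (m+5) → α) :
    Matrix.vecCons x u 5 =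
      Matrix.vecHead (Matrix.vecTail (Matrix.vecTail (Matrix.vecTail (Matrix.vecTail u)))) :=
  rfl


def phi6 : P6 →ₐ[ℂ] P6 :=
  aeval ![X 0, X 1, X 4 ^ 2, X 3 * X 5, X 4 * X 2 * X 3, X 2 ^ 2 * X 3 ^ 2]

lemma psi_eq : psiC2 = (Ideal.Quotient.mkₐ ℂ IC2).comp phi6 := by
  apply MvPolynomial.algHom_ext
  intro i
  fin_cases i <;> simp [psiC2, phi6]

def q1 : P6 := X 4 * (X 0 - X 1) - X 3 * X 2
def q2 : P6 := X 5 * (X 0 - X 1) - X 3 * X 4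
def q3 : P6 := X 4 ^ 2 - X 2 * X 5

def Jgen : Ideal P6 := Ideal.span {q1, q2, q3}

def p1 : P6 := X 4 * X 0 - X 3 * X 2
def p2 : P6 := X 5 * X 0 - X 3 * X 4
def p3 : P6 := X 4 ^ 2 - X 2 * X 5

def J2 : Ideal P6 := Ideal.span {p1, p2, p3}

def sig : P6 →ₐ[ℂ] P6 := aeval ![X 0 + X 1, X 1, X 2, X 3, X 4, X 5]
def sig' : P6 →ₐ[ℂ] P6 := aeval ![X 0 - X 1, X 1, X 2, X 3, X 4, X 5]

lemma sig_sig' (f : P6) : sig' (sig f) = f := by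
  have : sig'.comp sig = AlgHom.id ℂ P6 := by
    apply MvPolynomial.algHom_ext
    intro i
    fin_cases i <;> simp [sig, sig']
  calc sig' (sig f) = (sig'.comp sig) f := rfl
  _ = f := by rw [this]; rfl

def psi2 : P6 →ₐ[ℂ] P6 :=
  aeval ![X 0 * X 1, X 4, X 0 ^ 2 * X 2 ^ 2, X 5 * X 1 * X 3, X 0 * X 2 ^ 2 * X 3 * X 5,
    X 2 ^ 2 * X 3 ^ 2 * X 5 ^ 2]

def phi0 : P6 →ₐ[ℂ] P6 :=
  aeval ![X 0 * X 1 + X 4, X 4, X 2 * X 3, X 5, X 0 * X 2, X 1 * X 3]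

lemma phi0_rel : phi0 relC2 = 0 := by
  simp [phi0, relC2]
  ring

lemma psi2_sig (f : P6) : psi2 (sig f) = phi0 (phi6 f) := by
  have : psi2.comp sig = phi0.comp phi6 := by
    apply MvPolynomial.algHom_ext
    intro i
    fin_cases i <;> (simp [psi2, sig, phi0, phi6]; try ring)
  calc psi2 (sig f) = (psi2.comp sig) f := rfl
  _ = (phi0.comp phi6) f := by rw [this]
  _ = phi0 (phi6 f) := rfl

lemma sig_J (f : P6) (hf : sig f ∈ J2) : f ∈ Jgen := by
  have h1 : f = sig' (sig f) := (sig_sig' f).symm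
  have h2 : f ∈ Ideal.map (sig'.toRingHom : P6 →+* P6) J2 := by
    rw [h1]; exact Ideal.mem_map_of_mem _ hf
  rw [J2, Ideal.map_span] at h2
  refine Ideal.span_le.mpr ?_ h2
  intro x hx
  simp only [Set.mem_image, Set.mem_insert_iff, Set.mem_singleton_iff] at hx
  obtain ⟨y, hy, rfl⟩ := hx
  rcases hy with rfl | rfl | rfl
  · have : sig'.toRingHom p1 = q1 := by simp [sig', p1, q1]; try ring
    rw [this]; exact Ideal.subset_span (by simp)
  · have : sig'.toRingHom p2 = q2 := by simp [sig', p2, q2]; try ring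
    rw [this]; exact Ideal.subset_span (by simp)
  · have : sig'.toRingHom p3 = q3 := by simp [sig', p3, q3]
    rw [this]; exact Ideal.subset_span (by simp)

/- ## normal form machinery -/

def nrm (e : Fin 6 →₀ ℕ) : Prop := e 4 ≤ 1 ∧ (e 0 = 0 ∨ (e 4 = 0 ∧ e 5 = 0))

def Nsub : Submodule ℂ P6 where
  carrier := {f | ∀ d ∈ f.support, nrm d}
  add_mem' := by
    intro a b ha hb d hd
    rcases Finset.mem_union.mp (MvPolynomial.support_add hd) with h | h
    · exact ha d h
    · exact hb d h
  zero_mem' := by simp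
  smul_mem' := by
    intro c f hf d hd
    exact hf d (Finsupp.support_smul hd)

def Wsub : Submodule ℂ P6 := Nsub ⊔ (J2.restrictScalars ℂ)

def mu (e : Fin 6 →₀ ℕ) : ℕ := 3 * e 0 + 2 * e 4 + 3 * e 5

lemma Xm (i : Fin 6) : (X i : P6) = monomial (Finsupp.single i 1) 1 := by
  rw [← pow_one (X i), X_pow_eq_monomial]

lemma sub_add_of_le {e u : Fin 6 →₀ ℕ} (h : ∀ i, u i ≤ e i) : e - u + u = e := by
  ext j
  rw [Finsupp.add_apply, Finsupp.tsub_apply]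
  exact Nat.sub_add_cancel (h j)

lemma step (e' u v : Fin 6 →₀ ℕ) (hq : (monomial u 1 : P6) - monomial v 1 ∈ J2)
    (h : (monomial (e' + v) 1 : P6) ∈ Wsub) : (monomial (e' + u) 1 : P6) ∈ Wsub := by
  have key : (monomial (e' + u) 1 : P6)
      = monomial e' 1 * (monomial u 1 - monomial v 1) + monomial (e' + v) 1 := by
    rw [mul_sub, monomial_mul, monomial_mul, one_mul]
    ring
  rw [key]
  refine Wsub.add_mem ?_ h
  have : monomial e' 1 * ((monomial u 1 : P6) - monomial v 1) ∈ J2 :=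
    Ideal.mul_mem_left _ _ hq
  exact le_sup_right (α := Submodule ℂ P6) ((Submodule.restrictScalars_mem ℂ J2 _).mpr this)

lemma hq1 : (monomial (Finsupp.single 4 1 + Finsupp.single 0 1) 1 : P6)
    - monomial (Finsupp.single 3 1 + Finsupp.single 2 1) 1 ∈ J2 := by
  have h1 : (monomial (Finsupp.single 4 1 + Finsupp.single 0 1) 1 : P6) = X 4 * X 0 := by
    rw [Xm 4, Xm 0, monomial_mul, one_mul]
  have h2 : (monomial (Finsupp.single 3 1 + Finsupp.single 2 1) 1 : P6) = X 3 * X 2 := by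
    rw [Xm 3, Xm 2, monomial_mul, one_mul]
  rw [h1, h2]
  exact Ideal.subset_span (by simp [p1])

lemma hq2 : (monomial (Finsupp.single 5 1 + Finsupp.single 0 1) 1 : P6)
    - monomial (Finsupp.single 3 1 + Finsupp.single 4 1) 1 ∈ J2 := by
  have h1 : (monomial (Finsupp.single 5 1 + Finsupp.single 0 1) 1 : P6) = X 5 * X 0 := by
    rw [Xm 5, Xm 0, monomial_mul, one_mul]
  have h2 : (monomial (Finsupp.single 3 1 + Finsupp.single 4 1) 1 : P6) = X 3 * X 4 := by
    rw [Xm 3, Xm 4, monomial_mul, one_mul]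
  rw [h1, h2]
  exact Ideal.subset_span (by simp [p2])

lemma hq3 : (monomial (Finsupp.single 4 2) 1 : P6)
    - monomial (Finsupp.single 2 1 + Finsupp.single 5 1) 1 ∈ J2 := by
  have h1 : (monomial (Finsupp.single 4 2) 1 : P6) = X 4 ^ 2 := X_pow_eq_monomial.symm
  have h2 : (monomial (Finsupp.single 2 1 + Finsupp.single 5 1) 1 : P6) = X 2 * X 5 := by
    rw [Xm 2, Xm 5, monomial_mul, one_mul]
  rw [h1, h2]
  exact Ideal.subset_span (by simp [p3])

lemma mono_nrm_mem (e : Fin 6 →₀ ℕ) (he : nrm e) : (monomial e 1 : P6) ∈ Wsub := by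
  refine le_sup_left (α := Submodule ℂ P6) ?_
  intro d hd
  rw [MvPolynomial.support_monomial] at hd
  simp only [if_neg (one_ne_zero (α := ℂ))] at hd
  rw [Finset.mem_singleton] at hd
  subst hd; exact he

lemma mono_mem_W : ∀ (k : ℕ) (e : Fin 6 →₀ ℕ), mu e ≤ k → (monomial e 1 : P6) ∈ Wsub := by
  intro k
  induction k with
  | zero =>
    intro e he
    refine mono_nrm_mem e ?_
    unfold mu at he
    constructor <;> omega
  | succ k ih =>
    intro e he
    by_cases hn : nrm e
    · exact mono_nrm_mem e hn
    · have hcase : 2 ≤ e 4 ∨ (1 ≤ e 0 ∧ 1 ≤ e 4) ∨ (1 ≤ e 0 ∧ 1 ≤ e 5) := by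
        unfold nrm at hn; omega
      unfold mu at he
      rcases hcase with hc | hc | hc
      · -- rule p3 : X4^2 → X2 X5
        have hle : ∀ i, (Finsupp.single (4 : Fin 6) 2) i ≤ e i := by
          intro i
          rw [Finsupp.single_apply]
          split_ifs with h
          · cases h; exact hc
          · exact Nat.zero_le _
        have hee := sub_add_of_le hle
        rw [← hee]
        refine step _ _ _ hq3 (ih _ ?_)
        have h0 : ((e - Finsupp.single (4:Fin 6) 2 + (Finsupp.single (2:Fin 6) 1 + Finsupp.single (5:Fin 6) 1) : Fin 6 →₀ ℕ)) 0 = e 0 := by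
          simp [Finsupp.add_apply, Finsupp.tsub_apply, Finsupp.single_apply]
        have h4 : ((e - Finsupp.single (4:Fin 6) 2 + (Finsupp.single (2:Fin 6) 1 + Finsupp.single (5:Fin 6) 1) : Fin 6 →₀ ℕ)) 4 = e 4 - 2 := by
          simp [Finsupp.add_apply, Finsupp.tsub_apply, Finsupp.single_apply]
        have h5 : ((e - Finsupp.single (4:Fin 6) 2 + (Finsupp.single (2:Fin 6) 1 + Finsupp.single (5:Fin 6) 1) : Fin 6 →₀ ℕ)) 5 = e 5 + 1 := by
          simp [Finsupp.add_apply, Finsupp.tsub_apply, Finsupp.single_apply]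
        unfold mu
        rw [h0, h4, h5]
        omega
      · -- rule p1 : X4 X0 → X3 X2
        have hle : ∀ i, ((Finsupp.single (4 : Fin 6) 1 + Finsupp.single (0 : Fin 6) 1 : Fin 6 →₀ ℕ)) i ≤ e i := by
          intro i
          rw [Finsupp.add_apply, Finsupp.single_apply, Finsupp.single_apply]
          split_ifs with h1 h2 h2
          · exact absurd (h1.trans h2.symm) (by decide)
          · cases h1; omega
          · cases h2; omega
          · exact Nat.zero_le _
        have hee := sub_add_of_le hle
        rw [← hee]
        refine step _ _ _ hq1 (ih _ ?_)
        have h0 : ((e - (Finsupp.single (4:Fin 6) 1 + Finsupp.single (0:Fin 6) 1) + (Finsupp.single (3:Fin 6) 1 + Finsupp.single (2:Fin 6) 1) : Fin 6 →₀ ℕ)) 0 = e 0 - 1 := by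
          simp [Finsupp.add_apply, Finsupp.tsub_apply, Finsupp.single_apply]
        have h4 : ((e - (Finsupp.single (4:Fin 6) 1 + Finsupp.single (0:Fin 6) 1) + (Finsupp.single (3:Fin 6) 1 + Finsupp.single (2:Fin 6) 1) : Fin 6 →₀ ℕ)) 4 = e 4 - 1 := by
          simp [Finsupp.add_apply, Finsupp.tsub_apply, Finsupp.single_apply]
        have h5 : ((e - (Finsupp.single (4:Fin 6) 1 + Finsupp.single (0:Fin 6) 1) + (Finsupp.single (3:Fin 6) 1 + Finsupp.single (2:Fin 6) 1) : Fin 6 →₀ ℕ)) 5 = e 5 := by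
          simp [Finsupp.add_apply, Finsupp.tsub_apply, Finsupp.single_apply]
        unfold mu
        rw [h0, h4, h5]
        omega
      · -- rule p2 : X5 X0 → X3 X4
        have hle : ∀ i, ((Finsupp.single (5 : Fin 6) 1 + Finsupp.single (0 : Fin 6) 1 : Fin 6 →₀ ℕ)) i ≤ e i := by
          intro i
          rw [Finsupp.add_apply, Finsupp.single_apply, Finsupp.single_apply]
          split_ifs with h1 h2 h2
          · exact absurd (h1.trans h2.symm) (by decide)
          · cases h1; omega
          · cases h2; omega
          · exact Nat.zero_le _
        have hee := sub_add_of_le hle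
        rw [← hee]
        refine step _ _ _ hq2 (ih _ ?_)
        have h0 : ((e - (Finsupp.single (5:Fin 6) 1 + Finsupp.single (0:Fin 6) 1) + (Finsupp.single (3:Fin 6) 1 + Finsupp.single (4:Fin 6) 1) : Fin 6 →₀ ℕ)) 0 = e 0 - 1 := by
          simp [Finsupp.add_apply, Finsupp.tsub_apply, Finsupp.single_apply]
        have h4 : ((e - (Finsupp.single (5:Fin 6) 1 + Finsupp.single (0:Fin 6) 1) + (Finsupp.single (3:Fin 6) 1 + Finsupp.single (4:Fin 6) 1) : Fin 6 →₀ ℕ)) 4 = e 4 + 1 := by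
          simp [Finsupp.add_apply, Finsupp.tsub_apply, Finsupp.single_apply]
        have h5 : ((e - (Finsupp.single (5:Fin 6) 1 + Finsupp.single (0:Fin 6) 1) + (Finsupp.single (3:Fin 6) 1 + Finsupp.single (4:Fin 6) 1) : Fin 6 →₀ ℕ)) 5 = e 5 - 1 := by
          simp [Finsupp.add_apply, Finsupp.tsub_apply, Finsupp.single_apply]
        unfold mu
        rw [h0, h4, h5]
        omega

lemma all_mem_W (f : P6) : f ∈ Wsub := by
  induction f using MvPolynomial.induction_on' with
  | monomial d a =>
    have : (monomial d a : P6) = a • monomial d 1 := by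
      rw [MvPolynomial.smul_monomial, smul_eq_mul, mul_one]
    rw [this]
    exact Wsub.smul_mem a (mono_mem_W (mu d) d le_rfl)
  | add p q hp hq => exact Wsub.add_mem hp hq

/- ## injectivity on normal forms -/

def Fmap (e : Fin 6 →₀ ℕ) : Fin 6 →₀ ℕ :=
  Finsupp.single 0 (e 0 + 2*e 2 + e 4) + Finsupp.single 1 (e 0 + e 3)
  + Finsupp.single 2 (2*e 2 + 2*e 4 + 2*e 5) + Finsupp.single 3 (e 3 + e 4 + 2*e 5)
  + Finsupp.single 4 (e 1) + Finsupp.single 5 (e 3 + e 4 + 2*e 5)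

lemma Fmap_0 (e : Fin 6 →₀ ℕ) : Fmap e 0 = e 0 + 2*e 2 + e 4 := by
  simp [Fmap, Finsupp.add_apply, Finsupp.single_apply]
lemma Fmap_1 (e : Fin 6 →₀ ℕ) : Fmap e 1 = e 0 + e 3 := by
  simp [Fmap, Finsupp.add_apply, Finsupp.single_apply]
lemma Fmap_2 (e : Fin 6 →₀ ℕ) : Fmap e 2 = 2*e 2 + 2*e 4 + 2*e 5 := by
  simp [Fmap, Finsupp.add_apply, Finsupp.single_apply]
lemma Fmap_3 (e : Fin 6 →₀ ℕ) : Fmap e 3 = e 3 + e 4 + 2*e 5 := by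
  simp [Fmap, Finsupp.add_apply, Finsupp.single_apply]
lemma Fmap_4 (e : Fin 6 →₀ ℕ) : Fmap e 4 = e 1 := by
  simp [Fmap, Finsupp.add_apply, Finsupp.single_apply]
lemma Fmap_5 (e : Fin 6 →₀ ℕ) : Fmap e 5 = e 3 + e 4 + 2*e 5 := by
  simp [Fmap, Finsupp.add_apply, Finsupp.single_apply]

lemma psi2_monomial (e : Fin 6 →₀ ℕ) (c : ℂ) : psi2 (monomial e c) = monomial (Fmap e) c := by
  rw [psi2, aeval_monomial]
  rw [Finsupp.prod_fintype _ _ (fun i => pow_zero _)]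
  rw [show (monomial (Fmap e) c : P6) = C c * ((Fmap e).prod fun n k => X n ^ k) from monomial_eq]
  rw [Finsupp.prod_fintype _ _ (fun i => pow_zero _)]
  rw [Fin.prod_univ_six, Fin.prod_univ_six]
  rw [Fmap_0, Fmap_1, Fmap_2, Fmap_3, Fmap_4, Fmap_5]
  simp only [Matrix.cons_val_zero, Matrix.cons_val_one, Matrix.head_cons, Matrix.cons_val_two,
    Matrix.cons_val_three, Matrix.cons_val_four, Matrix.cons_val_five, Matrix.vecHead,
    Matrix.vecTail, Function.comp_apply, Fin.succ_zero_eq_one, Fin.succ_one_eq_two,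
    algebraMap_eq]
  simp
  exact Or.inl (by ring)

lemma Fmap_inj {e e' : Fin 6 →₀ ℕ} (he : nrm e) (he' : nrm e') (h : Fmap e = Fmap e') :
    e = e' := by
  have h0 : e 0 + 2*e 2 + e 4 = e' 0 + 2*e' 2 + e' 4 := by
    rw [← Fmap_0, ← Fmap_0, h]
  have h1 : e 0 + e 3 = e' 0 + e' 3 := by rw [← Fmap_1, ← Fmap_1, h]
  have h3 : e 3 + e 4 + 2*e 5 = e' 3 + e' 4 + 2*e' 5 := by rw [← Fmap_3, ← Fmap_3, h]
  have h4 : e 1 = e' 1 := by rw [← Fmap_4, ← Fmap_4, h]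
  obtain ⟨ha, hb⟩ := he
  obtain ⟨ha', hb'⟩ := he'
  ext i
  fin_cases i <;> simp <;> omega

lemma psi2_inj_N {n : P6} (hn : n ∈ Nsub) (h : psi2 n = 0) : n = 0 := by
  by_contra hne
  obtain ⟨d, hd⟩ := (MvPolynomial.support_nonempty (p := n)).mpr hne
  have hps : psi2 n = ∑ e ∈ n.support, monomial (Fmap e) (coeff e n) := by
    conv_lhs => rw [n.as_sum]
    rw [map_sum]
    exact Finset.sum_congr rfl fun e _ => psi2_monomial e _
  have hc : coeff (Fmap d) (psi2 n) = coeff d n := by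
    rw [hps, MvPolynomial.coeff_sum]
    rw [Finset.sum_eq_single d]
    · simp [coeff_monomial]
    · intro e he hne'
      rw [coeff_monomial, if_neg]
      intro hEq
      exact hne' (Fmap_inj (hn e he) (hn d hd) hEq)
    · intro h'; exact absurd hd h'
  rw [h] at hc
  simp only [coeff_zero] at hc
  exact (MvPolynomial.mem_support_iff.mp hd) hc.symm

lemma J2_ker : ∀ x ∈ J2, psi2 x = 0 := by
  intro x hx
  have hle : J2 ≤ RingHom.ker (psi2 : P6 →ₐ[ℂ] P6) := by
    rw [J2, Ideal.span_le]
    intro y hy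
    simp only [Set.mem_insert_iff, Set.mem_singleton_iff] at hy
    rcases hy with rfl | rfl | rfl <;>
      (rw [SetLike.mem_coe, RingHom.mem_ker]; simp [psi2, p1, p2, p3]; try ring)
  exact RingHom.mem_ker.mp (hle hx)

lemma ker_le : RingHom.ker psiC2 ≤ Jgen := by
  intro f hf
  have h1 : phi6 f ∈ IC2 := by
    have h0 : psiC2 f = 0 := RingHom.mem_ker.mp hf
    rw [psi_eq] at h0
    have : Ideal.Quotient.mk IC2 (phi6 f) = 0 := h0
    exact (Ideal.Quotient.eq_zero_iff_mem).mp this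
  obtain ⟨h, hh⟩ := (Ideal.mem_span_singleton).mp h1
  have h2 : psi2 (sig f) = 0 := by
    rw [psi2_sig, hh, map_mul, phi0_rel, zero_mul]
  obtain ⟨nn, hnn, jj, hjj, hsum⟩ := Submodule.mem_sup.mp (all_mem_W (sig f))
  have hj' : jj ∈ J2 := (Submodule.restrictScalars_mem ℂ J2 jj).mp hjj
  have hpsij : psi2 jj = 0 := J2_ker jj hj'
  have hpn : psi2 nn = 0 := by
    have := h2
    rw [← hsum, map_add, hpsij, add_zero] at this
    exact this
  have hn0 : nn = 0 := psi2_inj_N hnn hpn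
  have hsf : sig f ∈ J2 := by
    rw [← hsum, hn0, zero_add]; exact hj'
  exact sig_J f hsf

lemma J_le_ker : Jgen ≤ RingHom.ker psiC2 := by
  rw [Jgen, Ideal.span_le]
  intro x hx
  simp only [Set.mem_insert_iff, Set.mem_singleton_iff] at hx
  rw [SetLike.mem_coe, RingHom.mem_ker]
  have key : ∀ y : P6, phi6 y ∈ IC2 → psiC2 y = 0 := by
    intro y hy
    rw [psi_eq]
    exact (Ideal.Quotient.eq_zero_iff_mem).mpr hy
  rcases hx with rfl | rfl | rfl
  · refine key _ ?_
    have : phi6 q1 = relC2 * (X 3 * X 4) := by simp [phi6, q1, relC2]; ring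
    rw [this]
    exact Ideal.mul_mem_right _ _ (Ideal.subset_span rfl)
  · refine key _ ?_
    have : phi6 q2 = relC2 * (X 2 * X 3 ^ 2) := by simp [phi6, q2, relC2]; ring
    rw [this]
    exact Ideal.mul_mem_right _ _ (Ideal.subset_span rfl)
  · refine key _ ?_
    have : phi6 q3 = relC2 * 0 := by simp [phi6, q3, relC2]; ring
    rw [this]
    exact Ideal.mul_mem_right _ _ (Ideal.subset_span rfl)

lemma kernel_eq : RingHom.ker psiC2 = Jgen := le_antisymm ker_le J_le_ker

/- ## Part A : invariants -/

def wc : Fin 6 → ℤ := ![0, 0, 1, -1, 0, 1]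
def ws2 : Fin 6 → ZMod 2 := ![0, 0, 1, 0, 1, 0]

lemma weight_wc (e : Fin 6 →₀ ℕ) : Finsupp.weight wc e = (e 2 : ℤ) + e 5 - e 3 := by
  rw [Finsupp.weight_apply, Finsupp.sum_fintype _ _ (fun i => by simp), Fin.sum_univ_six]
  simp [wc, nsmul_eq_mul]
  ring

lemma weight_ws (e : Fin 6 →₀ ℕ) : Finsupp.weight ws2 e = ((e 2 + e 4 : ℕ) : ZMod 2) := by
  rw [Finsupp.weight_apply, Finsupp.sum_fintype _ _ (fun i => by simp), Fin.sum_univ_six]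
  simp [ws2, nsmul_eq_mul]

lemma relC2_hom_c : relC2.IsWeightedHomogeneous wc 1 := by
  have h : relC2 ∈ weightedHomogeneousSubmodule ℂ wc 1 := by
    have e1 : relC2 = X 2 * X 0 - X 2 * X 1 - X 4 * X 5 := by rw [relC2]; ring
    rw [e1]
    refine sub_mem (sub_mem ?_ ?_) ?_ <;> rw [mem_weightedHomogeneousSubmodule]
    · simpa [wc] using (isWeightedHomogeneous_X ℂ wc 2).mul (isWeightedHomogeneous_X ℂ wc 0)
    · simpa [wc] using (isWeightedHomogeneous_X ℂ wc 2).mul (isWeightedHomogeneous_X ℂ wc 1)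
    · simpa [wc] using (isWeightedHomogeneous_X ℂ wc 4).mul (isWeightedHomogeneous_X ℂ wc 5)
  exact (mem_weightedHomogeneousSubmodule _ _ _ _).mp h

lemma relC2_hom_s : relC2.IsWeightedHomogeneous ws2 1 := by
  have h : relC2 ∈ weightedHomogeneousSubmodule ℂ ws2 1 := by
    have e1 : relC2 = X 2 * X 0 - X 2 * X 1 - X 4 * X 5 := by rw [relC2]; ring
    rw [e1]
    refine sub_mem (sub_mem ?_ ?_) ?_ <;> rw [mem_weightedHomogeneousSubmodule]
    · simpa [ws2] using (isWeightedHomogeneous_X ℂ ws2 2).mul (isWeightedHomogeneous_X ℂ ws2 0)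
    · simpa [ws2] using (isWeightedHomogeneous_X ℂ ws2 2).mul (isWeightedHomogeneous_X ℂ ws2 1)
    · simpa [ws2] using (isWeightedHomogeneous_X ℂ ws2 4).mul (isWeightedHomogeneous_X ℂ ws2 5)
  exact (mem_weightedHomogeneousSubmodule _ _ _ _).mp h

lemma comp_mem_span {M : Type} [AddCommMonoid M] [DecidableEq M] {w : Fin 6 → M} {m₀ : M}
    (hrel : relC2.IsWeightedHomogeneous w m₀) {p : P6} (hp : p ∈ IC2) (n : M) :
    weightedHomogeneousComponent w n p ∈ IC2 := by
  obtain ⟨h, rfl⟩ := Ideal.mem_span_singleton.mp hp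
  have hfin := weightedHomogeneousComponent_finsupp (w := w) h
  have hs : relC2 * h = ∑ k ∈ hfin.toFinset, relC2 * weightedHomogeneousComponent w k h := by
    rw [← Finset.mul_sum, ← finsum_eq_sum _ hfin, sum_weightedHomogeneousComponent]
  rw [hs, map_sum]
  apply Submodule.sum_mem
  intro k _
  have hk := hrel.mul (weightedHomogeneousComponent_isWeightedHomogeneous k h)
  rw [weightedHomogeneousComponent_of_mem ((mem_weightedHomogeneousSubmodule _ _ _ _).mpr hk)]
  split_ifs
  · exact Ideal.mul_mem_right _ _ (Ideal.subset_span rfl)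
  · exact zero_mem _

lemma sub_comp_mem {M : Type} [AddCommMonoid M] [DecidableEq M] (w : Fin 6 → M) (f : P6)
    (h : ∀ n : M, n ≠ 0 → weightedHomogeneousComponent w n f ∈ IC2) :
    f - weightedHomogeneousComponent w 0 f ∈ IC2 := by
  have hfin := weightedHomogeneousComponent_finsupp (w := w) f
  set T := hfin.toFinset ∪ {0} with hT
  have hdec : f = ∑ k ∈ T, weightedHomogeneousComponent w k f := by
    rw [← finsum_eq_finset_sum_of_support_subset _ ?_, sum_weightedHomogeneousComponent]
    intro x hx
    exact Finset.mem_union_left _ (hfin.mem_toFinset.mpr hx)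
  have h0T : (0 : M) ∈ T := Finset.mem_union_right _ (Finset.mem_singleton_self 0)
  have hsum : weightedHomogeneousComponent w 0 f
      + ∑ k ∈ T.erase 0, weightedHomogeneousComponent w k f = f :=
    (Finset.add_sum_erase T (fun k => weightedHomogeneousComponent w k f) h0T).trans hdec.symm
  have heq : f - weightedHomogeneousComponent w 0 f
      = ∑ k ∈ T.erase 0, weightedHomogeneousComponent w k f :=
    sub_eq_iff_eq_add'.mpr hsum.symm
  rw [heq]
  exact Submodule.sum_mem _ fun k hk => h k (Finset.ne_of_mem_erase hk)

lemma act_monomial (c s : ℂ) (e : Fin 6 →₀ ℕ) (k : ℂ) :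
    actC2 c s (monomial e k)
      = (c ^ (e 2 + e 5) * c⁻¹ ^ (e 3) * s ^ (e 2 + e 4)) • monomial e k := by
  rw [actC2, aeval_monomial, Finsupp.prod_fintype _ _ (fun i => pow_zero _), Fin.prod_univ_six]
  rw [MvPolynomial.smul_eq_C_mul,
    show (monomial e k : P6) = C k * (e.prod fun n j => X n ^ j) from monomial_eq,
    Finsupp.prod_fintype _ _ (fun i => pow_zero _), Fin.prod_univ_six]
  simp only [Matrix.cons_val_zero, Matrix.cons_val_one, Matrix.head_cons, Matrix.cons_val_two,
    Matrix.cons_val_three, Matrix.cons_val_four, Matrix.cons_val_five, Matrix.vecHead,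
    Matrix.vecTail, Function.comp_apply, Fin.succ_zero_eq_one, Fin.succ_one_eq_two,
    algebraMap_eq, map_mul, map_pow, show (Fin.succ 2 : Fin 5) = 3 from rfl,
    show (((2 : Fin 3).succ).succ : Fin 5) = 4 from rfl,
    show ((2 : Fin 3).succ : Fin 4) = 3 from rfl, show ((3 : Fin 4).succ : Fin 5) = 4 from rfl,
    show (Fin.succ (3 : Fin 4) : Fin 5) = 4 from rfl]
  ring

lemma comp_act_c (c : ℂ) (hc : c ≠ 0) (n : ℤ) (f : P6) :
    weightedHomogeneousComponent wc n (actC2 c 1 f)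
      = c ^ n • weightedHomogeneousComponent wc n f := by
  induction f using MvPolynomial.induction_on' with
  | add p q hp hq => rw [map_add, map_add, hp, hq, map_add, smul_add]
  | monomial e k =>
    rw [act_monomial]
    simp only [one_pow, mul_one]
    rw [LinearMap.map_smul]
    rw [weightedHomogeneousComponent_of_mem
      ((mem_weightedHomogeneousSubmodule _ _ _ _).mpr
        (isWeightedHomogeneous_monomial wc e k rfl))]
    split_ifs with h
    · congr 1
      have hcast : ((e 2 : ℤ) + e 5 - e 3) = ((e 2 + e 5 : ℕ) : ℤ) - ((e 3 : ℕ) : ℤ) := by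
        push_cast; ring
      rw [h, weight_wc, hcast, zpow_sub₀ hc, zpow_natCast, zpow_natCast, div_eq_mul_inv, inv_pow]
    · rw [smul_zero, smul_zero]

lemma comp_act_s (f : P6) :
    weightedHomogeneousComponent ws2 1 (actC2 1 (-1) f)
      = -weightedHomogeneousComponent ws2 1 f := by
  induction f using MvPolynomial.induction_on' with
  | add p q hp hq => rw [map_add, map_add, hp, hq, map_add, neg_add]
  | monomial e k =>
    rw [act_monomial]
    simp only [one_pow, inv_one, one_mul]
    rw [LinearMap.map_smul]
    rw [weightedHomogeneousComponent_of_mem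
      ((mem_weightedHomogeneousSubmodule _ _ _ _).mpr
        (isWeightedHomogeneous_monomial ws2 e k rfl))]
    split_ifs with h
    · rw [weight_ws] at h
      have hodd : (e 2 + e 4) % 2 = 1 := by
        rcases Nat.even_or_odd (e 2 + e 4) with he | he
        · exfalso
          rw [(ZMod.natCast_eq_zero_iff _ 2).mpr he.two_dvd] at h
          exact (by decide : ¬ ((1 : ZMod 2) = 0)) h
        · exact Nat.odd_iff.mp he
      have : ((-1 : ℂ)) ^ (e 2 + e 4) = -1 := Odd.neg_one_pow (Nat.odd_iff.mpr hodd)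
      rw [this, neg_smul, one_smul]
    · rw [smul_zero, neg_zero]

lemma zmod2_decomp (p : P6) :
    p = weightedHomogeneousComponent ws2 0 p + weightedHomogeneousComponent ws2 1 p := by
  have h := sum_weightedHomogeneousComponent ws2 p
  rw [finsum_eq_sum_of_fintype] at h
  rw [show (Finset.univ : Finset (ZMod 2)) = {0, 1} from by decide] at h
  rw [Finset.sum_pair (by decide : (0 : ZMod 2) ≠ 1)] at h
  exact h.symm

lemma range_of_weights (g : P6)
    (hg : ∀ d ∈ g.support, Finsupp.weight wc d = 0 ∧ Finsupp.weight ws2 d = 0) :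
    g ∈ phi6.range := by
  rw [g.as_sum]
  apply Subalgebra.sum_mem
  intro d hd
  obtain ⟨hwc, hws⟩ := hg d hd
  rw [weight_wc] at hwc
  rw [weight_ws] at hws
  have hdvd : 2 ∣ (d 2 + d 4) := (ZMod.natCast_eq_zero_iff _ 2).mp hws
  obtain ⟨a, b, k4, h2, h3, h4⟩ : ∃ a b k4,
      d 2 = 2*b + a ∧ d 3 = d 2 + d 5 ∧ d 4 = 2*k4 + a :=
    ⟨d 2 % 2, d 2 / 2, (d 4 - d 2 % 2)/2, by omega, by omega, by omega⟩
  have hmono : (monomial d (coeff d g) : P6) = coeff d g • monomial d 1 := by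
    rw [smul_monomial, smul_eq_mul, mul_one]
  rw [hmono]
  apply Subalgebra.smul_mem
  refine ⟨X 0 ^ d 0 * X 1 ^ d 1 * X 2 ^ k4 * X 3 ^ d 5 * X 4 ^ a * X 5 ^ b, ?_⟩
  have hx0 : phi6 (X 0) = X 0 := by simp [phi6]
  have hx1 : phi6 (X 1) = X 1 := by simp [phi6]
  have hx2 : phi6 (X 2) = X 4 ^ 2 := by simp [phi6]
  have hx3 : phi6 (X 3) = X 3 * X 5 := by simp [phi6]
  have hx4 : phi6 (X 4) = X 4 * X 2 * X 3 := by simp [phi6]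
  have hx5 : phi6 (X 5) = X 2 ^ 2 * X 3 ^ 2 := by simp [phi6]
  simp only [AlgHom.toRingHom_eq_coe, RingHom.coe_coe, map_mul, map_pow, hx0, hx1, hx2, hx3,
    hx4, hx5]
  rw [show (monomial d 1 : P6) = C 1 * (d.prod fun n j => X n ^ j) from monomial_eq,
    Finsupp.prod_fintype _ _ (fun i => pow_zero _), Fin.prod_univ_six]
  rw [h3, h4, h2, C_1, one_mul]
  ring

lemma act_phi6 (c s : ℂ) (hc : c ≠ 0) (hs : s * s = 1) :
    (actC2 c s).comp phi6 = phi6 := by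
  have hcc : (C c : P6) * C c⁻¹ = 1 := by rw [← map_mul, mul_inv_cancel₀ hc, C_1]
  have hss : (C s : P6) * C s = 1 := by rw [← map_mul, hs, C_1]
  apply MvPolynomial.algHom_ext
  intro i
  fin_cases i
  · simp [actC2, phi6]
  · simp [actC2, phi6]
  · simp [actC2, phi6, map_mul, mul_pow]
    rcases mul_self_eq_one_iff.mp hs with rfl | rfl
    · left; exact C_1
    · right; simp
  · simp [actC2, phi6, map_mul]
    linear_combination (X 3 * X 5 : P6) * hcc
  · simp [actC2, phi6, map_mul]
    linear_combination (X 4 * X 2 * X 3 * (C c * C c⁻¹) : P6) * hss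
      + (X 4 * X 2 * X 3 : P6) * hcc
  · simp [actC2, phi6, map_mul, mul_pow]
    linear_combination ((C c * C c⁻¹) * (C c * C c⁻¹) * (X 2 ^ 2 * X 3 ^ 2) : P6) * hss
      + ((C c * C c⁻¹ + 1) * (X 2 ^ 2 * X 3 ^ 2) : P6) * hcc

lemma act_IC2 (c s : ℂ) {p : P6} (hp : p ∈ IC2) : actC2 c s p ∈ IC2 := by
  obtain ⟨h, rfl⟩ := Ideal.mem_span_singleton.mp hp
  rw [map_mul]
  have : actC2 c s relC2 = C (c * s) * relC2 := by
    simp [actC2, relC2]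
    ring
  rw [this]
  exact Ideal.mul_mem_right _ _ (Ideal.mul_mem_left _ _ (Ideal.subset_span rfl))

/-- The map `ℂ[x₁,…,x₆] → R` above surjects onto the ring of `ℂ* × {±1}`-invariants of `R`
(its range is exactly the set of invariant elements), and its kernel is generated by the
three quadrics `x₅(x₁-x₂) - x₄x₃`, `x₆(x₁-x₂) - x₄x₅`, `x₅² - x₃x₆`; hence the invariant
ring is `ℂ[x₁,…,x₆]/(x₅(x₁-x₂) - x₄x₃, x₆(x₁-x₂) - x₄x₅, x₅² - x₃x₆)`. -/
theorem stmt3 :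
    (∀ r : P6 ⧸ IC2,
      (∀ (c : ℂˣ) (s : ℂ), s = 1 ∨ s = -1 →
        ∀ f : P6, Ideal.Quotient.mk IC2 f = r →
          Ideal.Quotient.mk IC2 (actC2 (c : ℂ) s f) = r)
      ↔ r ∈ psiC2.range) ∧
    RingHom.ker psiC2 =
      Ideal.span {X 4 * (X 0 - X 1) - X 3 * X 2, X 5 * (X 0 - X 1) - X 3 * X 4,
        X 4 ^ 2 - X 2 * X 5} := by
  classical
  constructor
  · intro r
    constructor
    · -- invariant → range
      intro h
      obtain ⟨f, hf⟩ := Ideal.Quotient.mk_surjective r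
      have h2 : actC2 2 1 f - f ∈ IC2 := by
        have h' := h (Units.mk0 2 two_ne_zero) 1 (Or.inl rfl) f hf
        rw [show ((Units.mk0 (2:ℂ) two_ne_zero : ℂˣ) : ℂ) = 2 from rfl, ← hf] at h'
        exact (Ideal.Quotient.eq).mp h'
      have hcomp : ∀ n : ℤ, n ≠ 0 → weightedHomogeneousComponent wc n f ∈ IC2 := by
        intro n hn
        have hu : weightedHomogeneousComponent wc n (actC2 2 1 f - f) ∈ IC2 :=
          comp_mem_span relC2_hom_c h2 n
        rw [map_sub, comp_act_c 2 two_ne_zero n f] at hu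
        have h21 : (2:ℂ) ^ n - 1 ≠ 0 := by
          intro hzero
          apply hn
          have h1 : (2:ℂ) ^ n = 1 := sub_eq_zero.mp hzero
          have h2r : (2:ℝ) ^ n = 1 := by
            rw [show ((2:ℂ)) = ((2:ℝ):ℂ) from by norm_num] at h1
            rw [← Complex.ofReal_zpow] at h1
            exact_mod_cast h1
          have hinj := zpow_right_injective₀ (a := (2:ℝ)) (by norm_num) (by norm_num)
          have hz : (2:ℝ)^n = (2:ℝ)^(0:ℤ) := by simpa using h2r
          exact hinj hz
        have hkey : weightedHomogeneousComponent wc n f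
            = ((2:ℂ)^n - 1)⁻¹ • ((2:ℂ)^n • weightedHomogeneousComponent wc n f
              - weightedHomogeneousComponent wc n f) := by
          rw [show (2:ℂ)^n • weightedHomogeneousComponent wc n f
              - weightedHomogeneousComponent wc n f
              = ((2:ℂ)^n - 1) • weightedHomogeneousComponent wc n f from by
            rw [sub_smul, one_smul], smul_smul, inv_mul_cancel₀ h21, one_smul]
        rw [hkey]
        exact Submodule.smul_of_tower_mem _ _ hu
      have hf0 : f - weightedHomogeneousComponent wc 0 f ∈ IC2 := sub_comp_mem wc f hcomp
      set f0 := weightedHomogeneousComponent wc 0 f with hf0def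
      have hmkf0 : Ideal.Quotient.mk IC2 f0 = r := by
        rw [← hf]; exact ((Ideal.Quotient.eq).mpr hf0).symm
      have hv : actC2 1 (-1) f0 - f0 ∈ IC2 := by
        have h' := h 1 (-1) (Or.inr rfl) f0 hmkf0
        rw [show ((1 : ℂˣ) : ℂ) = 1 from rfl, ← hmkf0] at h'
        exact (Ideal.Quotient.eq).mp h'
      have hcomp1 : weightedHomogeneousComponent ws2 1 f0 ∈ IC2 := by
        have hu := comp_mem_span relC2_hom_s hv 1
        rw [map_sub, comp_act_s f0] at hu
        have hkey : weightedHomogeneousComponent ws2 1 f0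
            = (-(2:ℂ))⁻¹ • (-(weightedHomogeneousComponent ws2 1 f0)
              - weightedHomogeneousComponent ws2 1 f0) := by
          rw [show -(weightedHomogeneousComponent ws2 1 f0)
              - weightedHomogeneousComponent ws2 1 f0
              = (-(2:ℂ)) • weightedHomogeneousComponent ws2 1 f0 from by
            rw [neg_smul, two_smul]; abel, smul_smul, inv_mul_cancel₀ (by norm_num), one_smul]
        rw [hkey]
        exact Submodule.smul_of_tower_mem _ _ hu
      set g := weightedHomogeneousComponent ws2 0 f0 with hgdef
      have hsub : f0 - g ∈ IC2 := by
        have : f0 - g = weightedHomogeneousComponent ws2 1 f0 :=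
          sub_eq_iff_eq_add'.mpr (zmod2_decomp f0)
        rw [this]; exact hcomp1
      have hmkg : Ideal.Quotient.mk IC2 g = r := by
        rw [← hmkf0]; exact ((Ideal.Quotient.eq).mpr hsub).symm
      have hgsupp : ∀ d ∈ g.support, Finsupp.weight wc d = 0 ∧ Finsupp.weight ws2 d = 0 := by
        intro d hd
        have hcg : coeff d g ≠ 0 := mem_support_iff.mp hd
        constructor
        · have hcf0 : coeff d f0 ≠ 0 := by
            intro h0
            apply hcg
            rw [hgdef, coeff_weightedHomogeneousComponent]
            split_ifs <;> simp [h0]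
          exact weightedHomogeneousComponent_isWeightedHomogeneous (w := wc) 0 f hcf0
        · exact weightedHomogeneousComponent_isWeightedHomogeneous (w := ws2) 0 f0 hcg
      obtain ⟨pre, hpre⟩ := range_of_weights g hgsupp
      refine ⟨pre, ?_⟩
      rw [psi_eq]
      show (Ideal.Quotient.mkₐ ℂ IC2) (phi6 pre) = r
      have hpre' : phi6 pre = g := hpre
      rw [hpre']
      simpa using hmkg
    · -- range → invariant
      rintro ⟨g, hg⟩ c s hs f hf
      have hr : Ideal.Quotient.mk IC2 (phi6 g) = r := by rw [← hg, psi_eq]; rfl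
      have h1 : f - phi6 g ∈ IC2 := (Ideal.Quotient.eq).mp (hf.trans hr.symm)
      have hs2 : s * s = 1 := by rcases hs with rfl | rfl <;> norm_num
      have h3 : actC2 (c : ℂ) s (phi6 g) = phi6 g := by
        have hcomp := act_phi6 (c : ℂ) s (Units.ne_zero c) hs2
        calc actC2 (c : ℂ) s (phi6 g) = ((actC2 (c : ℂ) s).comp phi6) g := rfl
        _ = phi6 g := by rw [hcomp]
      have h2 : actC2 (c : ℂ) s f - phi6 g ∈ IC2 := by
        have := act_IC2 (c : ℂ) s h1
        rw [map_sub, h3] at this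
        exact this
      rw [(Ideal.Quotient.eq).mpr h2, hr]
  · exact kernel_eq
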